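/- If m > 6 and n > 7, then the Bouwer graph B(k,m,n) contains no cycle of length 3, 4, or 5. -/

import Mathlib

/-- The Bouwer relation: `(a,b)` is related to `(a+1,c)` when `c = b` or `c`
differs from `b` in exactly one coordinate `j`, where `c j = b j + 2 ^ a`
(the power of `2` computed in `ZMod n`). -/
def bouwerRel (k m n : ℕ) (u v : ZMod m × (Fin (k - 1) → ZMod n)) : Prop :=
  v.1 = u.1 + 1 ∧
    (v.2 = u.2 ∨ ∃ j : Fin (k - 1),
      (∀ i : Fin (k - 1), i ≠ j → v.2 i = u.2 i) ∧ v.2 j = u.2 j + 2 ^ (u.1).val)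

/-- The Bouwer graph `B(k,m,n)`, with vertex set `ZMod m × (ZMod n)^(k-1)`. -/
def bouwer (k m n : ℕ) : SimpleGraph (ZMod m × (Fin (k - 1) → ZMod n)) :=
  SimpleGraph.fromRel (bouwerRel k m n)


section helpers
variable {n : ℕ} {ι : Type*} [DecidableEq ι]

def sing (j : ι) (t : ZMod n) : ι → ZMod n := fun i => if i = j then t else 0

lemma sing_same (j : ι) (t : ZMod n) : sing j t j = t := if_pos rfl
lemma sing_eq {i j : ι} (h : i = j) (t : ZMod n) : sing j t i = t := if_pos h
lemma sing_ne {i j : ι} (h : i ≠ j) (t : ZMod n) : sing j t i = 0 := if_neg h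

def SS (t : ZMod n) (f : ι → ZMod n) : Prop := f = 0 ∨ ∃ j, f = sing j t

def Step (t : ZMod n) (b c : ι → ZMod n) : Prop :=
  c = b ∨ ∃ j, (∀ i, i ≠ j → c i = b i) ∧ c j = b j + t

lemma step_diff {t : ZMod n} {b c : ι → ZMod n} (h : Step t b c) :
    ∃ d, SS t d ∧ c = b + d := by
  rcases h with rfl | ⟨j, hoff, hj⟩
  · exact ⟨0, Or.inl rfl, (add_zero _).symm⟩
  · refine ⟨sing j t, Or.inr ⟨j, rfl⟩, funext fun i => ?_⟩
    by_cases hij : i = j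
    · subst hij; simpa [sing] using hj
    · simpa [sing, hij] using hoff i hij

lemma keyM {t t' : ZMod n} (ht : t ≠ 0) (ht' : t' ≠ 0) (htt : t + t' ≠ 0)
    {f0 f1 f2 f3 : ι → ZMod n} (h0 : SS t f0) (h1 : SS t' f1) (h2 : SS t f2) (h3 : SS t' f3)
    (he : f0 + f1 = f2 + f3) :
    (f0 = f2 ∧ f1 = f3) ∨ (t = t' ∧ f0 = f3 ∧ f1 = f2) := by
  rcases h0 with rfl | ⟨j0, rfl⟩ <;> rcases h1 with rfl | ⟨j1, rfl⟩ <;>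
    rcases h2 with rfl | ⟨j2, rfl⟩ <;> rcases h3 with rfl | ⟨j3, rfl⟩ <;>
    (try simp only [zero_add, add_zero] at he)
  -- (0,0,0,0)
  · exact Or.inl ⟨rfl, rfl⟩
  -- (0,0,0,s3)
  · have h := congrFun he j3
    rw [Pi.zero_apply, sing_same] at h
    exact absurd h.symm ht'
  -- (0,0,s2,0)
  · have h := congrFun he j2
    rw [Pi.zero_apply, sing_same] at h
    exact absurd h.symm ht
  -- (0,0,s2,s3)
  · exfalso
    have h := congrFun he j2
    simp only [Pi.zero_apply, Pi.add_apply, sing_same] at h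
    by_cases hj : j2 = j3
    · rw [sing_eq hj] at h; exact htt h.symm
    · rw [sing_ne hj, add_zero] at h; exact ht h.symm
  -- (0,s1,0,0)
  · have h := congrFun he j1
    rw [Pi.zero_apply, sing_same] at h
    exact absurd h ht'
  -- (0,s1,0,s3)
  · exact Or.inl ⟨rfl, he⟩
  -- (0,s1,s2,0)
  · have h := congrFun he j1
    rw [sing_same] at h
    by_cases hj : j1 = j2
    · rw [sing_eq hj] at h
      exact Or.inr ⟨h.symm, rfl, he⟩
    · rw [sing_ne hj] at h; exact absurd h ht'
  -- (0,s1,s2,s3)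
  · exfalso
    by_cases h12 : j2 = j1
    · by_cases h32 : j3 = j2
      · have h := congrFun he j3
        simp only [Pi.add_apply, sing_same] at h
        rw [sing_eq (h32.trans h12), sing_eq h32] at h
        exact ht (by linear_combination -h)
      · have h := congrFun he j3
        simp only [Pi.add_apply, sing_same] at h
        rw [sing_ne (fun q : j3 = j1 => h32 (q.trans h12.symm)),
          sing_ne (fun q : j3 = j2 => h32 q), zero_add] at h
        exact ht' h.symm
    · have h := congrFun he j2
      simp only [Pi.add_apply, sing_same] at h
      rw [sing_ne h12] at h
      by_cases h32 : j2 = j3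
      · rw [sing_eq h32] at h; exact htt h.symm
      · rw [sing_ne h32, add_zero] at h; exact ht h.symm
  -- (s0,0,0,0)
  · have h := congrFun he j0
    rw [Pi.zero_apply, sing_same] at h
    exact absurd h ht
  -- (s0,0,0,s3)
  · have h := congrFun he j0
    rw [sing_same] at h
    by_cases hj : j0 = j3
    · rw [sing_eq hj] at h
      exact Or.inr ⟨h, he, rfl⟩
    · rw [sing_ne hj] at h; exact absurd h ht
  -- (s0,0,s2,0)
  · exact Or.inl ⟨he, rfl⟩
  -- (s0,0,s2,s3)
  · exfalso
    by_cases h20 : j2 = j0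
    · have h := congrFun he j3
      simp only [Pi.add_apply, sing_same] at h
      rw [h20] at h
      exact ht' (by linear_combination -h)
    · have h := congrFun he j0
      simp only [Pi.add_apply, sing_same] at h
      rw [sing_ne (fun q : j0 = j2 => h20 q.symm)] at h
      by_cases h30 : j0 = j3
      · rw [sing_eq h30, zero_add] at h
        have h' := congrFun he j2
        simp only [Pi.add_apply, sing_same] at h'
        rw [sing_ne h20, sing_ne (fun q : j2 = j3 => h20 (q.trans h30.symm)), add_zero] at h'
        exact ht h'.symm
      · rw [sing_ne h30, zero_add] at h
        exact ht h
  -- (s0,s1,0,0)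
  · exfalso
    have h := congrFun he j0
    simp only [Pi.add_apply, Pi.zero_apply, sing_same] at h
    by_cases hj : j0 = j1
    · rw [sing_eq hj] at h; exact htt h
    · rw [sing_ne hj, add_zero] at h; exact ht h
  -- (s0,s1,0,s3)
  · exfalso
    have h := congrFun he j0
    simp only [Pi.add_apply, sing_same] at h
    by_cases h10 : j0 = j1
    · rw [sing_eq h10] at h
      by_cases h30 : j0 = j3
      · rw [sing_eq h30] at h; exact ht (by linear_combination h)
      · rw [sing_ne h30] at h; exact htt h
    · rw [sing_ne h10, add_zero] at h
      by_cases h30 : j0 = j3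
      · have h' := congrFun he j1
        simp only [Pi.add_apply, sing_same] at h'
        rw [sing_ne (fun q : j1 = j0 => h10 q.symm),
          sing_ne (fun q : j1 = j3 => h10 (h30.trans q.symm)), zero_add] at h'
        exact ht' h'
      · rw [sing_ne h30] at h; exact ht h
  -- (s0,s1,s2,0)
  · exfalso
    have h := congrFun he j1
    simp only [Pi.add_apply, Pi.zero_apply, sing_same] at h
    by_cases h10 : j1 = j0
    · rw [sing_eq h10] at h
      by_cases h21 : j1 = j2
      · rw [sing_eq h21] at h; exact ht' (by linear_combination h)
      · rw [sing_ne h21] at h; exact htt h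
    · rw [sing_ne h10, zero_add] at h
      by_cases h21 : j1 = j2
      · have h' := congrFun he j0
        simp only [Pi.add_apply, sing_same] at h'
        rw [sing_ne (fun q : j0 = j1 => h10 q.symm),
          sing_ne (fun q : j0 = j2 => h10 (q.trans h21.symm).symm), add_zero] at h'
        exact ht h'
      · rw [sing_ne h21] at h; exact ht' h
  -- (s0,s1,s2,s3)
  · by_cases h02 : j0 = j2
    · subst h02
      exact Or.inl ⟨rfl, add_left_cancel he⟩
    · have h := congrFun he j0
      simp only [Pi.add_apply, sing_same] at h
      rw [sing_ne (fun q : j0 = j2 => h02 q)] at h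
      by_cases h10 : j0 = j1
      · exfalso
        rw [sing_eq h10] at h
        by_cases h30 : j0 = j3
        · rw [sing_eq h30, zero_add] at h; exact ht (by linear_combination h)
        · rw [sing_ne h30] at h; exact htt (by linear_combination h)
      · rw [sing_ne (fun q : j0 = j1 => h10 q), add_zero, zero_add] at h
        by_cases h30 : j0 = j3
        · rw [sing_eq h30] at h
          have h' := congrFun he j2
          simp only [Pi.add_apply, sing_same] at h'
          rw [sing_ne (fun q : j2 = j0 => h02 q.symm),
            sing_ne (fun q : j2 = j3 => h02 (h30.trans q.symm)), add_zero, zero_add] at h'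
          by_cases h12 : j2 = j1
          · refine Or.inr ⟨h, funext fun i => ?_, funext fun i => ?_⟩
            · by_cases hi : i = j0
              · rw [sing_eq hi, sing_eq (hi.trans h30), h]
              · rw [sing_ne hi, sing_ne (fun q : i = j3 => hi (q.trans h30.symm))]
            · by_cases hi : i = j1
              · rw [sing_eq hi, sing_eq (hi.trans h12.symm), h]
              · rw [sing_ne hi, sing_ne (fun q : i = j2 => hi (q.trans h12))]
          · exfalso
            rw [sing_ne (fun q : j2 = j1 => h12 q)] at h'
            exact ht h'.symm
        · exfalso
          rw [sing_ne h30] at h; exact ht h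

end helpers

section graph
variable {k m n : ℕ}

lemma tfacts (hn : 7 < n) {t : ZMod n} (hu : IsUnit t) :
    t ≠ 0 ∧ t + t ≠ 0 ∧ 2 * t ≠ 0 ∧ t + 2 * t ≠ 0 ∧ t ≠ 2 * t := by
  haveI : Fact (1 < n) := ⟨by omega⟩
  obtain ⟨s, hs⟩ := hu.exists_right_inv
  have hc : ∀ c : ℕ, 0 < c → c < n → ((c : ZMod n)) ≠ 0 := by
    intro c h0 h1 hq
    rw [ZMod.natCast_eq_zero_iff] at hq
    exact absurd (Nat.le_of_dvd h0 hq) (by omega)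
  have h2 : t + t = 0 → False := by
    intro h
    refine hc 2 (by norm_num) (by omega) ?_
    push_cast
    linear_combination (-2 : ZMod n) * hs + s * h
  refine ⟨hu.ne_zero, fun h => h2 h, ?_, ?_, ?_⟩
  · intro h; exact h2 (by linear_combination h)
  · intro h
    refine hc 3 (by norm_num) (by omega) ?_
    push_cast
    linear_combination (-3 : ZMod n) * hs + s * h
  · intro h
    refine hc 1 (by norm_num) (by omega) ?_
    push_cast
    linear_combination -hs - s * h

lemma pow_val_succ (hm : 6 < m) (h2 : (2 : ZMod n) ^ m = 1) (a : ZMod m) :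
    (2 : ZMod n) ^ ((a + 1 : ZMod m).val) = 2 * 2 ^ a.val := by
  haveI : NeZero m := ⟨by omega⟩
  haveI : Fact (1 < m) := ⟨by omega⟩
  rw [ZMod.val_add, ZMod.val_one]
  have hv := ZMod.val_lt a
  by_cases hcl : a.val + 1 < m
  · rw [Nat.mod_eq_of_lt hcl, pow_succ, mul_comm]
  · have ha : a.val = m - 1 := by omega
    rw [ha, Nat.sub_add_cancel (by omega), Nat.mod_self, pow_zero, ← h2,
      ← pow_succ', Nat.sub_add_cancel (by omega)]

lemma adj_cases {u v : ZMod m × (Fin (k - 1) → ZMod n)} (h : (bouwer k m n).Adj u v) :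
    (v.1 = u.1 + 1 ∧ Step ((2 : ZMod n) ^ (u.1).val) u.2 v.2) ∨
      (u.1 = v.1 + 1 ∧ Step ((2 : ZMod n) ^ (v.1).val) v.2 u.2) := by
  rcases ((SimpleGraph.fromRel_adj (bouwerRel k m n) u v).mp h).2 with h' | h'
  · exact Or.inl ⟨h'.1, h'.2⟩
  · exact Or.inr ⟨h'.1, h'.2⟩

lemma level_sum {u v : ZMod m × (Fin (k - 1) → ZMod n)} (p : (bouwer k m n).Walk u v) :
    ∃ s t : ℕ, s + t = p.length ∧ u.1 + (s : ZMod m) = v.1 + (t : ZMod m) := by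
  induction p with
  | nil => exact ⟨0, 0, rfl, by simp⟩
  | @cons u w v h q ih =>
    obtain ⟨s, t, hst, he⟩ := ih
    rcases adj_cases h with ⟨hl, -⟩ | ⟨hl, -⟩
    · refine ⟨s + 1, t, by simp [SimpleGraph.Walk.length_cons]; omega, ?_⟩
      push_cast
      linear_combination he - hl
    · refine ⟨s, t + 1, by simp [SimpleGraph.Walk.length_cons]; omega, ?_⟩
      push_cast
      linear_combination he + hl

end graph

section four
variable {n : ℕ} {ι : Type*} [DecidableEq ι]

lemma four2 {t t' : ZMod n} (ht : t ≠ 0) (ht' : t' ≠ 0) (htt : t + t' ≠ 0) (htne : t ≠ t')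
    {b p q r : ι → ZMod n} (h1 : Step t b q) (h2 : Step t' q p) (h3 : Step t b r)
    (h4 : Step t' r p) (hqr : q ≠ r) : False := by
  obtain ⟨d1, s1, e1⟩ := step_diff h1
  obtain ⟨d2, s2, e2⟩ := step_diff h2
  obtain ⟨d3, s3, e3⟩ := step_diff h3
  obtain ⟨d4, s4, e4⟩ := step_diff h4
  have he : d1 + d2 = d3 + d4 := by linear_combination -e1 - e2 + e3 + e4
  rcases keyM ht ht' htt s1 s2 s3 s4 he with ⟨hA, -⟩ | ⟨hT, -, -⟩
  · exact hqr (by rw [e1, e3, hA])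
  · exact htne hT

lemma four1 {t : ZMod n} (ht : t ≠ 0) (htt : t + t ≠ 0)
    {x0 x1 x2 x3 : ι → ZMod n} (h1 : Step t x0 x1) (h2 : Step t x2 x1) (h3 : Step t x2 x3)
    (h4 : Step t x0 x3) (h02 : x0 ≠ x2) (h13 : x1 ≠ x3) : False := by
  obtain ⟨dA, sA, eA⟩ := step_diff h1
  obtain ⟨dB, sB, eB⟩ := step_diff h2
  obtain ⟨dC, sC, eC⟩ := step_diff h3
  obtain ⟨dD, sD, eD⟩ := step_diff h4
  have he : dA + dC = dD + dB := by linear_combination -eA - eC + eD + eB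
  rcases keyM ht ht htt sA sC sD sB he with ⟨hAD, -⟩ | ⟨-, hAB, -⟩
  · exact h13 (by rw [eA, eD, hAD])
  · exact h02 (add_right_cancel (b := dA) (by rw [← eA, hAB]; exact eB))

end four

theorem bouwer_no_short_cycles (k m n : ℕ) (hk : 1 < k) (hm : 6 < m) (hn : 7 < n)
    (h2 : (2 : ZMod n) ^ m = 1) :
    ∀ (v : ZMod m × (Fin (k - 1) → ZMod n)) (c : (bouwer k m n).Walk v v),
      c.IsCycle → c.length ≠ 3 ∧ c.length ≠ 4 ∧ c.length ≠ 5 := by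
  intro v c hc
  haveI : NeZero m := ⟨by omega⟩
  haveI : Fact (1 < n) := ⟨by omega⟩
  have hodd : ∀ L : ℕ, c.length = L → L ≤ 5 → L % 2 = 1 → False := by
    intro L hL hle hpar
    obtain ⟨s, t, hst, he⟩ := level_sum c
    have hst' : (s : ZMod m) = (t : ZMod m) := by linear_combination he
    have hstn : s = t := by
      have h1 : s < m := by omega
      have h2' : t < m := by omega
      have h3 := congrArg ZMod.val hst'
      rwa [ZMod.val_cast_of_lt h1, ZMod.val_cast_of_lt h2'] at h3
    omega
  refine ⟨fun h3 => hodd 3 h3 (by norm_num) rfl, ?_, fun h5 => hodd 5 h5 (by norm_num) rfl⟩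
  intro hlen
  have hcm : ∀ c : ℕ, 0 < c → c < m → ((c : ZMod m)) ≠ 0 := by
    intro c h0 h1 hq
    rw [ZMod.natCast_eq_zero_iff] at hq
    exact absurd (Nat.le_of_dvd h0 hq) (by omega)
  have hu2 : IsUnit (2 : ZMod n) :=
    IsUnit.of_mul_eq_one ((2 : ZMod n) ^ (m - 1)) (by
      rw [← pow_succ', Nat.sub_add_cancel (by omega : 1 ≤ m), h2])
  cases c with
  | nil => simp at hlen
  | @cons _ x1 _ h01 c1 =>
    cases c1 with
    | nil => simp at hlen
    | @cons _ x2 _ h12 c2 =>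
      cases c2 with
      | nil => simp at hlen
      | @cons _ x3 _ h23 c3 =>
        cases c3 with
        | nil => simp at hlen
        | @cons _ x4 _ h34 c4 =>
          cases c4 with
          | cons h45 c5 => simp [SimpleGraph.Walk.length_cons] at hlen
          | nil =>
            clear hlen
            have hnd := hc.support_nodup
            simp [SimpleGraph.Walk.support_cons, List.nodup_cons] at hnd
            obtain ⟨⟨h12', h13', h1v⟩, ⟨h23', h2v⟩, h3v⟩ := hnd
            rcases adj_cases h01 with ⟨l1, s1⟩ | ⟨l1, s1⟩ <;>
              rcases adj_cases h12 with ⟨l2, s2⟩ | ⟨l2, s2⟩ <;>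
              rcases adj_cases h23 with ⟨l3, s3⟩ | ⟨l3, s3⟩ <;>
              rcases adj_cases h34 with ⟨l4, s4⟩ | ⟨l4, s4⟩
            -- FFFF
            · exact absurd (show ((4:ℕ) : ZMod m) = 0 by
                push_cast; linear_combination -l1-l2-l3-l4) (hcm 4 (by norm_num) (by omega))
            -- FFFB
            · exact absurd (show ((2:ℕ) : ZMod m) = 0 by
                push_cast; linear_combination -l1-l2-l3+l4) (hcm 2 (by norm_num) (by omega))
            -- FFBF
            · exact absurd (show ((2:ℕ) : ZMod m) = 0 by
                push_cast; linear_combination -l1-l2+l3-l4) (hcm 2 (by norm_num) (by omega))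
            -- FFBB
            · have e31 : x3.1 = x1.1 := l4.trans l1.symm
              rw [l1, pow_val_succ hm h2] at s2
              rw [e31, l1, pow_val_succ hm h2] at s3
              obtain ⟨ht0, htt, h2t, h3t, hne2⟩ := tfacts hn (hu2.pow (v.1).val)
              exact four2 ht0 h2t h3t hne2 s1 s2 s4 s3
                (fun hq => h13' (Prod.ext e31.symm hq))
            -- FBFF
            · exact absurd (show ((2:ℕ) : ZMod m) = 0 by
                push_cast; linear_combination -l1+l2-l3-l4) (hcm 2 (by norm_num) (by omega))
            -- FBFB
            · have e20 : x2.1 = v.1 := add_right_cancel (l2.symm.trans l1)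
              rw [e20] at s2 s3
              obtain ⟨ht0, htt, -, -, -⟩ := tfacts hn (hu2.pow (v.1).val)
              exact four1 ht0 htt s1 s2 s3 s4 (fun hq => h2v (Prod.ext e20 hq.symm))
                (fun hq => h13' (Prod.ext (l1.trans l4.symm) hq))
            -- FBBF
            · have e20 : x2.1 = v.1 := l3.trans l4.symm
              rw [l4, pow_val_succ hm h2] at s1
              rw [e20, l4, pow_val_succ hm h2] at s2
              obtain ⟨ht0, htt, h2t, h3t, hne2⟩ := tfacts hn (hu2.pow (x3.1).val)
              exact four2 ht0 h2t h3t hne2 s4 s1 s3 s2 (fun hq => h2v (Prod.ext e20 hq.symm))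
            -- FBBB
            · exact absurd (show ((2:ℕ) : ZMod m) = 0 by
                push_cast; linear_combination l1-l2-l3-l4) (hcm 2 (by norm_num) (by omega))
            -- BFFF
            · exact absurd (show ((2:ℕ) : ZMod m) = 0 by
                push_cast; linear_combination l1-l2-l3-l4) (hcm 2 (by norm_num) (by omega))
            -- BFFB
            · have e20 : x2.1 = v.1 := l2.trans l1.symm
              rw [e20, l1, pow_val_succ hm h2] at s3
              rw [l1, pow_val_succ hm h2] at s4
              obtain ⟨ht0, htt, h2t, h3t, hne2⟩ := tfacts hn (hu2.pow (x1.1).val)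
              exact four2 ht0 h2t h3t hne2 s1 s4 s2 s3 (fun hq => h2v (Prod.ext e20 hq.symm))
            -- BFBF
            · have e31 : x3.1 = x1.1 := add_right_cancel (l3.symm.trans l2)
              have e20 : x2.1 = v.1 := l2.trans l1.symm
              rw [e31] at s3 s4
              obtain ⟨ht0, htt, -, -, -⟩ := tfacts hn (hu2.pow (x1.1).val)
              exact four1 ht0 htt s1 s4 s3 s2 (fun hq => h13' (Prod.ext e31.symm hq))
                (fun hq => h2v (Prod.ext e20 hq.symm))
            -- BFBB
            · exact absurd (show ((2:ℕ) : ZMod m) = 0 by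
                push_cast; linear_combination -l1+l2-l3-l4) (hcm 2 (by norm_num) (by omega))
            -- BBFF
            · have e31 : x3.1 = x1.1 := l3.trans l2.symm
              rw [l2, pow_val_succ hm h2] at s1
              rw [e31, l2, pow_val_succ hm h2] at s4
              obtain ⟨ht0, htt, h2t, h3t, hne2⟩ := tfacts hn (hu2.pow (x2.1).val)
              exact four2 ht0 h2t h3t hne2 s2 s1 s3 s4 (fun hq => h13' (Prod.ext e31.symm hq))
            -- BBFB
            · exact absurd (show ((2:ℕ) : ZMod m) = 0 by
                push_cast; linear_combination -l1-l2+l3-l4) (hcm 2 (by norm_num) (by omega))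
            -- BBBF
            · exact absurd (show ((2:ℕ) : ZMod m) = 0 by
                push_cast; linear_combination -l1-l2-l3+l4) (hcm 2 (by norm_num) (by omega))
            -- BBBB
            · exact absurd (show ((4:ℕ) : ZMod m) = 0 by
                push_cast; linear_combination -l1-l2-l3-l4) (hcm 4 (by norm_num) (by omega))
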